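/- Let φ : Z[x_1,…,x_n, y_1,…,y_n] → Z[x_1,…,x_n] be the ring map with φ(x_i) = x_i and φ(y_i) = −x_i. For a column basis C = {a_{i_1},…,a_{i_d}} of a d×n matrix A and generic θ ∈ Z^d with θ = ∑_j λ_j a_{i_j} (all λ_j ≠ 0), set σ(C,θ) = {x_{i_j} : λ_j > 0} ∪ {y_{i_j} : λ_j < 0}. Then φ(⟨σ(C,θ)⟩) = ⟨x_i : i ∈ C⟩, and hence the image under φ of the intersection ∩_C ⟨σ(C,θ)⟩ over all column bases C equals the matroid ideal M*(A) = ∩_C ⟨x_i : i ∈ C⟩, independently of θ. -/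

import Mathlib

open MvPolynomial

/-- Sign-choice lemma: for a generic `θ` and a monomial exponent `m` whose support meets
every column basis, there is a sign choice `ε` such that every basis contains an index in the
support of `m` whose coefficient sign matches `ε`. -/
lemma sign_choice {d n : ℕ} (A : Matrix (Fin d) (Fin n) ℚ) (θ : Fin d → ℚ)
    (lam : (Fin d → Fin n) → Fin d → ℚ)
    (hlam : ∀ g : Fin d → Fin n,
      LinearIndependent ℚ (fun j : Fin d => fun i => A i (g j)) →
      (θ = ∑ j : Fin d, lam g j • (fun i => A i (g j)) ∧ ∀ j, lam g j ≠ 0))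
    (g₀ : Fin d → Fin n)
    (hg₀ : LinearIndependent ℚ (fun j : Fin d => fun i => A i (g₀ j)))
    (m : Fin n →₀ ℕ)
    (hm : ∀ g : Fin d → Fin n,
      LinearIndependent ℚ (fun j : Fin d => fun i => A i (g j)) → ∃ j, m (g j) ≠ 0) :
    ∃ ε : Fin n → Bool, ∀ g : Fin d → Fin n,
      LinearIndependent ℚ (fun j : Fin d => fun i => A i (g j)) →
      ∃ j, m (g j) ≠ 0 ∧
        ((ε (g j) = true ∧ 0 < lam g j) ∨ (ε (g j) = false ∧ lam g j < 0)) := by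
  classical
  set col : Fin n → (Fin d → ℚ) := fun c => fun i => A i c with hcol
  -- dimension nonzero, since otherwise `hm g₀` is absurd
  rcases Nat.eq_zero_or_pos d with hd | hd
  · subst hd
    obtain ⟨j, -⟩ := hm g₀ hg₀
    exact j.elim0
  have : NeZero d := ⟨by omega⟩
  -- Step 1: θ ∉ span of columns outside the support of m
  have hθW : θ ∉ Submodule.span ℚ (col '' {i | m i = 0}) := by
    intro hθ
    obtain ⟨b, hb_sub, hb_span, hb_ind⟩ := exists_linearIndependent ℚ (col '' {i | m i = 0})
    have hθb : θ ∈ Submodule.span ℚ b := by rw [hb_span]; exact hθ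
    have hbt : b ⊆ Set.range col := hb_sub.trans (Set.image_subset_range _ _)
    obtain ⟨c, hct, hbc, htc, hc_ind⟩ := exists_linearIndepOn_id_extension hb_ind hbt
    have hspan_c : ⊤ ≤ Submodule.span ℚ (Set.range ((↑) : c → (Fin d → ℚ))) := by
      rw [Subtype.range_coe]
      have h1 : Submodule.span ℚ (Set.range fun j => col (g₀ j)) = ⊤ :=
        hg₀.span_eq_top_of_card_eq_finrank' (by simp)
      have h2 : Set.range (fun j => col (g₀ j)) ⊆ Submodule.span ℚ c := by
        rintro - ⟨j, rfl⟩
        exact htc ⟨g₀ j, rfl⟩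
      calc (⊤ : Submodule ℚ (Fin d → ℚ)) = _ := h1.symm
        _ ≤ Submodule.span ℚ c := Submodule.span_le.mpr h2
    let basis : Module.Basis c ℚ (Fin d → ℚ) := Module.Basis.mk hc_ind hspan_c
    have : FiniteDimensional ℚ (Fin d → ℚ) := inferInstance
    have : Fintype c := FiniteDimensional.fintypeBasisIndex basis
    have hcard : Fintype.card c = d := by
      have := Module.finrank_eq_card_basis basis
      simpa using this.symm
    -- choose indices for the basis vectors, preferring indices outside the support of m
    have hpick : ∀ v : c, ∃ i : Fin n, col i = v ∧ ((v : Fin d → ℚ) ∈ b → m i = 0) := by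
      rintro ⟨v, hv⟩
      by_cases hvb : v ∈ b
      · obtain ⟨i, hi, hicol⟩ := hb_sub hvb
        exact ⟨i, hicol, fun _ => hi⟩
      · obtain ⟨i, hicol⟩ := hct hv
        exact ⟨i, hicol, fun h => absurd h hvb⟩
    choose idx hidx_col hidx_b using hpick
    let e : Fin d ≃ c := (Fintype.equivFinOfCardEq hcard).symm
    let g : Fin d → Fin n := fun j => idx (e j)
    have hgcol : (fun j => col (g j)) = fun j => ((e j : Fin d → ℚ)) := by
      funext j; exact hidx_col (e j)
    have hg : LinearIndependent ℚ (fun j : Fin d => fun i => A i (g j)) := by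
      show LinearIndependent ℚ (fun j => col (g j))
      rw [hgcol]
      exact hc_ind.comp e e.injective
    obtain ⟨hθeq, hθne⟩ := hlam g hg
    obtain ⟨j₀, hj₀⟩ := hm g hg
    have hej₀b : ((e j₀ : Fin d → ℚ)) ∉ b := fun h => hj₀ (hidx_b (e j₀) h)
    set l : (Fin d → ℚ) →ₗ[ℚ] ℚ := basis.coord (e j₀) with hl
    have hlb : ∀ v ∈ b, l v = 0 := by
      intro v hv
      have hvc : v ∈ c := hbc hv
      have : v = basis ⟨v, hvc⟩ := by rw [show basis ⟨v, hvc⟩ = v from Module.Basis.mk_apply _ _ _]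
      rw [this, hl, Module.Basis.coord_apply, Module.Basis.repr_self]
      rw [Finsupp.single_apply]
      rw [if_neg]
      intro hEq
      apply hej₀b
      rw [← hEq]
      exact hv
    have hlθ0 : l θ = 0 := by
      have : Submodule.span ℚ b ≤ LinearMap.ker l := by
        rw [Submodule.span_le]
        intro v hv
        exact hlb v hv
      exact this hθb
    have hlθ : l θ = lam g j₀ := by
      have hcolb : ∀ j, col (g j) = basis (e j) := by
        intro j
        rw [show basis (e j) = (e j : Fin d → ℚ) from Module.Basis.mk_apply _ _ _]
        exact hidx_col (e j)
      calc l θ = l (∑ j : Fin d, lam g j • col (g j)) := by rw [← hθeq]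
        _ = ∑ j : Fin d, lam g j • l (col (g j)) := by
              rw [map_sum]; simp [map_smul]
        _ = ∑ j : Fin d, lam g j • ((Finsupp.single (e j) (1:ℚ)) (e j₀)) := by
              refine Finset.sum_congr rfl fun j _ => ?_
              rw [hcolb j, hl, Module.Basis.coord_apply, Module.Basis.repr_self]
        _ = lam g j₀ := by
              rw [Finset.sum_eq_single j₀]
              · simp
              · intro j _ hne
                rw [Finsupp.single_apply, if_neg (by simpa using hne)]
                simp
              · simp
    rw [hlθ0.symm.trans hlθ] at hθne
    exact (hθne j₀) rfl
  -- Step 2: a dual functional separating θ from those columns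
  obtain ⟨ξ₀, hξ₀θ, hξ₀W⟩ :=
    Submodule.exists_dual_map_eq_bot_of_notMem hθW inferInstance
  have hξ₀0 : ∀ i : Fin n, m i = 0 → ξ₀ (col i) = 0 := by
    intro i hi
    have hmem : col i ∈ Submodule.span ℚ (col '' {i | m i = 0}) :=
      Submodule.subset_span ⟨i, hi, rfl⟩
    have := Submodule.mem_map_of_mem (f := ξ₀) hmem
    rw [hξ₀W] at this
    exact (Submodule.mem_bot ℚ).mp this
  set ξ : (Fin d → ℚ) →ₗ[ℚ] ℚ := if 0 < ξ₀ θ then ξ₀ else -ξ₀ with hξdef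
  have hξθ : 0 < ξ θ := by
    rw [hξdef]
    split
    · assumption
    · rename_i hnot
      simp only [LinearMap.neg_apply]
      rcases hξ₀θ.lt_or_gt with h | h
      · linarith
      · exact absurd h hnot
  have hξ0 : ∀ i : Fin n, m i = 0 → ξ (col i) = 0 := by
    intro i hi
    rw [hξdef]
    split
    · exact hξ₀0 i hi
    · simp [hξ₀0 i hi]
  refine ⟨fun i => decide (0 < ξ (col i)), fun g hg => ?_⟩
  obtain ⟨hθeq, hθne⟩ := hlam g hg
  have hsum : ∑ j : Fin d, lam g j * ξ (col (g j)) = ξ θ := by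
    rw [hθeq, map_sum]
    refine Finset.sum_congr rfl fun j _ => ?_
    rw [map_smul]; rfl
  have hexj : ∃ j, 0 < lam g j * ξ (col (g j)) := by
    by_contra h
    push_neg at h
    have : ∑ j : Fin d, lam g j * ξ (col (g j)) ≤ 0 :=
      Finset.sum_nonpos fun j _ => h j
    rw [hsum] at this
    linarith
  obtain ⟨j, hj⟩ := hexj
  have hmj : m (g j) ≠ 0 := by
    intro h0
    rw [hξ0 (g j) h0, mul_zero] at hj
    exact lt_irrefl 0 hj
  refine ⟨j, hmj, ?_⟩
  rcases mul_pos_iff.mp hj with ⟨h1, h2⟩ | ⟨h1, h2⟩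
  · left; exact ⟨by simpa using h2, h1⟩
  · right
    refine ⟨?_, h1⟩
    simp only [decide_eq_false_iff_not]
    intro h
    linarith

/-- Let `φ` collapse variables by `xᵢ ↦ xᵢ`, `yᵢ ↦ -xᵢ`. For each column basis
`C = {a_{g 0}, …, a_{g (d-1)}}` of `A` with `θ = ∑ λ_j a_{g j}` (all `λ_j ≠ 0`), set
`σ(C,θ) = {x_{g j} : λ_j > 0} ∪ {y_{g j} : λ_j < 0}`. Then
`φ⟨σ(C,θ)⟩ = ⟨xᵢ : i ∈ C⟩`, and the image under `φ` of the intersection of the ideals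
`⟨σ(C,θ)⟩` over all column bases equals `M*(𝒜) = ∩_C ⟨xᵢ : i ∈ C⟩`. -/
theorem stmt_11 (d n : ℕ) (A : Matrix (Fin d) (Fin n) ℚ) (θ : Fin d → ℚ)
    (lam : (Fin d → Fin n) → Fin d → ℚ)
    (hlam : ∀ g : Fin d → Fin n,
      LinearIndependent ℚ (fun j : Fin d => fun i => A i (g j)) →
      (θ = ∑ j : Fin d, lam g j • (fun i => A i (g j)) ∧ ∀ j, lam g j ≠ 0))
    (φ : MvPolynomial (Fin n ⊕ Fin n) ℤ →+* MvPolynomial (Fin n) ℤ)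
    (hφ : φ = (MvPolynomial.aeval (Sum.elim
        (fun i : Fin n => (X i : MvPolynomial (Fin n) ℤ))
        (fun i : Fin n => -X i))).toRingHom) :
    (∀ g : Fin d → Fin n,
        LinearIndependent ℚ (fun j : Fin d => fun i => A i (g j)) →
        Ideal.map φ (Ideal.span {p : MvPolynomial (Fin n ⊕ Fin n) ℤ | ∃ j : Fin d,
            (0 < lam g j ∧ p = X (Sum.inl (g j))) ∨
            (lam g j < 0 ∧ p = X (Sum.inr (g j)))}) =
          Ideal.span {p : MvPolynomial (Fin n) ℤ | ∃ j : Fin d, p = X (g j)}) ∧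
    Ideal.map φ (⨅ (g : Fin d → Fin n)
        (_ : LinearIndependent ℚ (fun j : Fin d => fun i => A i (g j))),
        Ideal.span {p : MvPolynomial (Fin n ⊕ Fin n) ℤ | ∃ j : Fin d,
          (0 < lam g j ∧ p = X (Sum.inl (g j))) ∨
          (lam g j < 0 ∧ p = X (Sum.inr (g j)))}) =
      ⨅ (g : Fin d → Fin n)
        (_ : LinearIndependent ℚ (fun j : Fin d => fun i => A i (g j))),
        Ideal.span {p : MvPolynomial (Fin n) ℤ | ∃ j : Fin d, p = X (g j)} := by
  classical
  have hφX1 : ∀ i : Fin n, φ (X (Sum.inl i)) = X i := by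
    intro i; rw [hφ]; simp
  have hφX2 : ∀ i : Fin n, φ (X (Sum.inr i)) = -X i := by
    intro i; rw [hφ]; simp
  have hφC : ∀ c : ℤ, φ (C c) = C c := by
    intro c; rw [hφ]
    simp only [AlgHom.toRingHom_eq_coe, RingHom.coe_coe]
    rw [aeval_C]
    simp [algebraMap_int_eq]
  set Ind : (Fin d → Fin n) → Prop :=
    fun g => LinearIndependent ℚ (fun j : Fin d => fun i => A i (g j)) with hInd
  set T : (Fin d → Fin n) → Set (MvPolynomial (Fin n ⊕ Fin n) ℤ) :=
    fun g => {p | ∃ j : Fin d,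
      (0 < lam g j ∧ p = X (Sum.inl (g j))) ∨ (lam g j < 0 ∧ p = X (Sum.inr (g j)))} with hT
  set U : (Fin d → Fin n) → Set (MvPolynomial (Fin n) ℤ) :=
    fun g => {p | ∃ j : Fin d, p = X (g j)} with hU
  have key : ∀ g, Ind g → Ideal.map φ (Ideal.span (T g)) = Ideal.span (U g) := by
    intro g hg
    rw [Ideal.map_span]
    apply le_antisymm
    · rw [Ideal.span_le]
      rintro - ⟨q, ⟨j, hq | hq⟩, rfl⟩
      · rw [hq.2, hφX1]
        exact Ideal.subset_span ⟨j, rfl⟩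
      · rw [hq.2, hφX2]
        exact (Ideal.span (U g)).neg_mem (Ideal.subset_span ⟨j, rfl⟩)
    · rw [Ideal.span_le]
      rintro - ⟨j, rfl⟩
      rcases lt_trichotomy (lam g j) 0 with h | h | h
      · have : φ (X (Sum.inr (g j))) ∈ φ '' (T g) :=
          Set.mem_image_of_mem _ ⟨j, Or.inr ⟨h, rfl⟩⟩
        have h2 := Ideal.subset_span this
        rw [hφX2] at h2
        simpa using (Ideal.span (φ '' T g)).neg_mem h2
      · exact absurd h ((hlam g hg).2 j)
      · have : φ (X (Sum.inl (g j))) ∈ φ '' (T g) :=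
          Set.mem_image_of_mem _ ⟨j, Or.inl ⟨h, rfl⟩⟩
        have h2 := Ideal.subset_span this
        rw [hφX1] at h2
        exact h2
  refine ⟨key, le_antisymm ?_ ?_⟩
  · refine le_iInf fun g => le_iInf fun hg => ?_
    rw [← key g hg]
    exact Ideal.map_mono (iInf_le_of_le g (iInf_le _ hg))
  · intro f hf
    by_cases hex : ∃ g, Ind g
    swap
    · have htop : (⨅ (g : Fin d → Fin n) (_ : Ind g), Ideal.span (T g)) = ⊤ := by
        rw [iInf_eq_top]
        intro g
        exact iInf_neg fun hg => hex ⟨g, hg⟩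
      rw [htop, Ideal.map_top]
      trivial
    obtain ⟨g₀, hg₀⟩ := hex
    -- support condition for every monomial of f
    have hfm : ∀ m ∈ f.support, ∀ g, Ind g → ∃ j, m (g j) ≠ 0 := by
      intro m hm g hg
      have h1 : f ∈ Ideal.span (U g) := by
        have := (Ideal.mem_iInf.mp hf) g
        exact (Ideal.mem_iInf.mp this) hg
      have hUeq : U g = X '' (Set.range g) := by
        ext p
        constructor
        · rintro ⟨j, rfl⟩; exact ⟨g j, ⟨j, rfl⟩, rfl⟩
        · rintro ⟨i, ⟨j, rfl⟩, rfl⟩; exact ⟨j, rfl⟩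
      rw [hUeq] at h1
      obtain ⟨i, ⟨j, rfl⟩, hi⟩ := mem_ideal_span_X_image.mp h1 m hm
      exact ⟨j, hi⟩
    -- choose signs for each monomial
    have hchoice : ∀ m : f.support, ∃ ε : Fin n → Bool, ∀ g, Ind g →
        ∃ j, (m : Fin n →₀ ℕ) (g j) ≠ 0 ∧
          ((ε (g j) = true ∧ 0 < lam g j) ∨ (ε (g j) = false ∧ lam g j < 0)) :=
      fun m => sign_choice A θ lam hlam g₀ hg₀ m (fun g hg => hfm m m.2 g hg)
    choose ε hε using hchoice
    -- the lift
    set w : f.support → Fin n → MvPolynomial (Fin n ⊕ Fin n) ℤ :=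
      fun m i => if ε m i then X (Sum.inl i) else -X (Sum.inr i) with hw
    set F : MvPolynomial (Fin n ⊕ Fin n) ℤ :=
      ∑ m ∈ f.support.attach,
        C (coeff (m : Fin n →₀ ℕ) f) * (m : Fin n →₀ ℕ).prod (fun i e => w m i ^ e) with hF
    have hφw : ∀ (m : f.support) (i : Fin n), φ (w m i) = X i := by
      intro m i
      rw [hw]
      dsimp only
      split
      · exact hφX1 i
      · rw [map_neg, hφX2, neg_neg]
    have hφF : φ F = f := by
      rw [hF, map_sum]
      have : ∀ m ∈ f.support.attach,
          φ (C (coeff (m : Fin n →₀ ℕ) f) * (m : Fin n →₀ ℕ).prod (fun i e => w m i ^ e))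
            = monomial (m : Fin n →₀ ℕ) (coeff (m : Fin n →₀ ℕ) f) := by
        intro m _
        rw [map_mul, hφC]
        rw [Finsupp.prod, map_prod]
        simp only [map_pow, hφw]
        rw [monomial_eq, Finsupp.prod]
      rw [Finset.sum_congr rfl this, Finset.sum_attach f.support
        (fun m => monomial m (coeff m f)), support_sum_monomial_coeff]
    have hFmem : F ∈ ⨅ (g : Fin d → Fin n) (_ : Ind g), Ideal.span (T g) := by
      rw [Ideal.mem_iInf]
      intro g
      rw [Ideal.mem_iInf]
      intro hg
      rw [hF]
      refine Ideal.sum_mem _ fun m _ => ?_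
      obtain ⟨j, hj0, hsgn⟩ := hε m g hg
      have hwmem : w m (g j) ∈ Ideal.span (T g) := by
        rcases hsgn with ⟨htr, hpos⟩ | ⟨hfa, hneg⟩
        · rw [hw]; dsimp only; rw [if_pos htr]
          exact Ideal.subset_span ⟨j, Or.inl ⟨hpos, rfl⟩⟩
        · rw [hw]; dsimp only; rw [if_neg (by simp [hfa])]
          exact (Ideal.span (T g)).neg_mem (Ideal.subset_span ⟨j, Or.inr ⟨hneg, rfl⟩⟩)
      have hprod : (m : Fin n →₀ ℕ).prod (fun i e => w m i ^ e) ∈ Ideal.span (T g) := by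
        rw [← Finsupp.mul_prod_erase (m : Fin n →₀ ℕ) (g j) _
          (Finsupp.mem_support_iff.mpr hj0)]
        exact Ideal.mul_mem_right _ _
          (Ideal.pow_mem_of_mem _ hwmem _ (Nat.pos_of_ne_zero hj0))
      exact Ideal.mul_mem_left _ _ hprod
    rw [← hφF]
    exact Ideal.mem_map_of_mem φ hFmem
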